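/- If S is a subset of a topological space T satisfying closure(interior(closure(S))) = closure(S) (for example S open or S dense), then gd(S) ≤ gd(T), where gd denotes the least cardinal κ such that Player I has a winning strategy in the open-point game of length κ⁺ on the space. -/

import Mathlib

open Cardinal Set TopologicalSpace

universe u

/-- The density of a topological space: least cardinality of a dense subset. -/
noncomputable def densityCard (X : Type u) [TopologicalSpace X] : Cardinal.{u} :=
  sInf {c | ∃ D : Set X, Dense D ∧ #D = c}

/-- δ(X): the supremum of the densities of dense subspaces of `X`. -/
noncomputable def deltaCard (X : Type u) [TopologicalSpace X] : Cardinal.{u} :=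
  ⨆ D : {D : Set X // Dense D}, densityCard ↥(D.1)

/-- A π-base: a family of nonempty open sets such that every nonempty open set
contains a member of the family. -/
def IsPiBase {X : Type u} [TopologicalSpace X] (B : Set (Set X)) : Prop :=
  (∀ U ∈ B, IsOpen U ∧ U.Nonempty) ∧
  ∀ U : Set X, IsOpen U → U.Nonempty → ∃ V ∈ B, V ⊆ U

/-- The π-weight: least cardinality of a π-base. -/
noncomputable def piWeight (X : Type u) [TopologicalSpace X] : Cardinal.{u} :=
  sInf {c | ∃ B : Set (Set X), IsPiBase B ∧ #B = c}

/-- The weight: least cardinality of a base of the topology. -/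
noncomputable def weightCard (X : Type u) [TopologicalSpace X] : Cardinal.{u} :=
  sInf {c | ∃ B : Set (Set X), IsTopologicalBasis B ∧ #B = c}

/-- The set of points played by Player II before stage `β`. -/
def PlayedSet {X : Type u} (x : Ordinal.{u} → X) (β : Ordinal.{u}) : Set X :=
  {p | ∃ α < β, x α = p}

/-- Player I has a winning strategy in the open-point game `G_{X,θ}`:
there is a strategy `U` assigning to each history of points played by Player II a
nonempty open set (at positions where the played points are not yet dense), depending
only on the initial segment of the history, such that in every run in which Player II
plays legally, the set of played points becomes dense at some stage `β < θ`. -/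
def PlayerIWins (X : Type u) [TopologicalSpace X] (θ : Ordinal.{u}) : Prop :=
  ∃ U : (Ordinal.{u} → X) → Ordinal.{u} → Set X,
    (∀ x β, ¬ Dense (PlayedSet x β) → IsOpen (U x β) ∧ (U x β).Nonempty) ∧
    (∀ x y β, (∀ α < β, x α = y α) → U x β = U y β) ∧
    ∀ x : Ordinal.{u} → X, (∀ β < θ, ¬ Dense (PlayedSet x β) → x β ∈ U x β) →
      ∃ β < θ, Dense (PlayedSet x β)

/-- gd(X): the least infinite cardinal κ such that Player I has a winning strategy
in the open-point game `G_{X,κ⁺}`. -/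
noncomputable def gd (X : Type u) [TopologicalSpace X] : Cardinal.{u} :=
  sInf {κ | ℵ₀ ≤ κ ∧ PlayerIWins X (Order.succ κ).ord}

/-- If `S ⊆ T` satisfies `closure (interior (closure S)) = closure S`
(e.g. `S` open or dense), then `gd(S) ≤ gd(T)`. -/
lemma exists_winning (T : Type u) [TopologicalSpace T] :
    ∃ κ : Cardinal.{u}, ℵ₀ ≤ κ ∧ PlayerIWins T (Order.succ κ).ord := by
  classical
  set c : Cardinal.{u} := #(Set T) with hc
  refine ⟨ℵ₀ ⊔ c, le_sup_left, ?_⟩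
  -- enumeration of all subsets of T by ordinals < c.ord
  have hmk : #(c.ord.ToType) = c := by rw [Cardinal.mk_toType, Cardinal.card_ord]
  obtain ⟨e⟩ : Nonempty (c.ord.ToType ≃ Set T) := by
    rw [← Cardinal.eq, hmk]
  let iso := (Ordinal.ToType.mk (o := c.ord))
  let f : Ordinal.{u} → Set T := fun β =>
    if hβ : β < c.ord then e (iso ⟨β, hβ⟩) else ∅
  have hf : ∀ O : Set T, ∃ α < c.ord, f α = O := by
    intro O
    refine ⟨(iso.symm (e.symm O)).1, (iso.symm (e.symm O)).2, ?_⟩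
    simp only [f]
    split_ifs with hb
    · show e (iso (iso.symm (e.symm O))) = O
      rw [OrderIso.apply_symm_apply, Equiv.apply_symm_apply]
    · exact absurd (iso.symm (e.symm O)).2 hb
  refine ⟨fun _ β => if IsOpen (f β) ∧ (f β).Nonempty then f β else Set.univ, ?_, ?_, ?_⟩
  · intro x β hd
    have hT : Nonempty T := by
      by_contra hT
      exact hd fun t => absurd ⟨t⟩ hT
    simp only
    split_ifs with ho
    · exact ho
    · exact ⟨isOpen_univ, univ_nonempty⟩
  · intro x y β _; rfl
  · intro x hx
    by_contra hcon
    push_neg at hcon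
    have hcθ : c.ord < (Order.succ (ℵ₀ ⊔ c)).ord := by
      exact Cardinal.ord_lt_ord.mpr (lt_of_le_of_lt le_sup_right (Order.lt_succ _))
    refine hcon c.ord hcθ ?_
    rw [dense_iff_inter_open]
    intro O hO hne
    obtain ⟨α, hα, hfa⟩ := hf O
    have hαθ : α < (Order.succ (ℵ₀ ⊔ c)).ord := hα.trans hcθ
    have := hx α hαθ (hcon α hαθ)
    simp only at this
    rw [if_pos (by rw [hfa]; exact ⟨hO, hne⟩), hfa] at this
    exact ⟨x α, this, α, hα, rfl⟩

open Classical in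
noncomputable def sim {T : Type u} (U : (Ordinal.{u} → T) → Ordinal.{u} → Set T)
    (W : Set T) (t₀ : T) (x : Ordinal.{u} → T) : Ordinal.{u} → T :=
  Ordinal.lt_wf.fix fun β ih =>
    if (U (fun α => if hα : α < β then ih α hα else t₀) β ∩ W).Nonempty then x β
    else if hn : (U (fun α => if hα : α < β then ih α hα else t₀) β).Nonempty then hn.choose
    else x β

open Classical in
lemma sim_eq {T : Type u} (U : (Ordinal.{u} → T) → Ordinal.{u} → Set T)
    (W : Set T) (t₀ : T) (x : Ordinal.{u} → T) (β : Ordinal.{u}) :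
    sim U W t₀ x β =
      if (U (fun α => if hα : α < β then sim U W t₀ x α else t₀) β ∩ W).Nonempty then x β
      else if hn : (U (fun α => if hα : α < β then sim U W t₀ x α else t₀) β).Nonempty
        then hn.choose else x β :=
  Ordinal.lt_wf.fix_eq _ _

lemma sim_agree {T : Type u} (U : (Ordinal.{u} → T) → Ordinal.{u} → Set T)
    (hU : ∀ x y β, (∀ α < β, x α = y α) → U x β = U y β)
    (W : Set T) (t₀ : T) (x y : Ordinal.{u} → T) (β : Ordinal.{u})
    (hxy : ∀ α < β, x α = y α) :
    ∀ α < β, sim U W t₀ x α = sim U W t₀ y α := by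
  intro α
  induction α using Ordinal.induction with
  | h α IH =>
    intro hα
    rw [sim_eq, sim_eq]
    have hz : (fun γ => if hγ : γ < α then sim U W t₀ x γ else t₀)
        = (fun γ => if hγ : γ < α then sim U W t₀ y γ else t₀) := by
      funext γ
      by_cases hγ : γ < α
      · rw [dif_pos hγ, dif_pos hγ, IH γ hγ (hγ.trans hα)]
      · rw [dif_neg hγ, dif_neg hγ]
    rw [hz, hxy α hα]

lemma sim_mem_W {T : Type u} (U : (Ordinal.{u} → T) → Ordinal.{u} → Set T)
    (W : Set T) (t₀ : T) (x : Ordinal.{u} → T) (α : Ordinal.{u})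
    (hW : sim U W t₀ x α ∈ W) : sim U W t₀ x α = x α := by
  rw [sim_eq] at hW ⊢
  split_ifs at hW ⊢ with h1 h2
  · rfl
  · exact absurd ⟨_, h2.choose_spec, hW⟩ h1
  · rfl

lemma transfer {T : Type u} [TopologicalSpace T] (S : Set T)
    (h : closure (interior (closure S)) = closure S) (hS : S.Nonempty)
    {θ : Ordinal.{u}} (hT : PlayerIWins T θ) : PlayerIWins ↥S θ := by
  classical
  obtain ⟨V, hV1, hV2, hV3⟩ := hT
  set W : Set T := interior (closure S) with hW
  have hclW : closure W = closure S := h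
  have hWsub : W ⊆ closure S := interior_subset
  obtain ⟨s₀, hs₀⟩ := hS
  set t₀ : T := s₀ with ht₀
  -- density pull-back
  have densS : ∀ (x : Ordinal.{u} → ↥S) (β : Ordinal.{u}),
      Dense (PlayedSet (sim V W t₀ (fun α => ↑(x α))) β) → Dense (PlayedSet x β) := by
    intro x β hd
    rw [dense_iff_inter_open]
    rintro Us hUs ⟨⟨p, hpS⟩, hpU⟩
    obtain ⟨O, hO, rfl⟩ := isOpen_induced_iff.mp hUs
    have hpO : p ∈ O := hpU
    have hOW : (O ∩ W).Nonempty := by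
      have hpcl : p ∈ closure W := by rw [hclW]; exact subset_closure hpS
      exact mem_closure_iff.mp hpcl O hO hpO
    have hd2 := dense_iff_inter_open.mp hd (O ∩ W) (hO.inter isOpen_interior) hOW
    obtain ⟨d, ⟨hdO, hdW⟩, α, hα, hda⟩ := hd2
    have hsim := sim_mem_W V W t₀ (fun α => ↑(x α)) α (by rw [hda]; exact hdW)
    refine ⟨x α, ?_, α, hα, rfl⟩
    show ↑(x α) ∈ O
    rw [show ((x α : T)) = d by rw [← hda, hsim]]
    exact hdO
  refine ⟨fun x β => if (V (sim V W t₀ (fun α => ↑(x α))) β ∩ W).Nonempty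
      then (Subtype.val ⁻¹' (V (sim V W t₀ (fun α => ↑(x α))) β ∩ W)) else Set.univ,
      ?_, ?_, ?_⟩
  · intro x β hdS
    have hdT : ¬ Dense (PlayedSet (sim V W t₀ (fun α => ↑(x α))) β) :=
      fun hd => hdS (densS x β hd)
    obtain ⟨hVo, hVne⟩ := hV1 _ β hdT
    simp only
    split_ifs with h1
    · refine ⟨(hVo.inter isOpen_interior).preimage continuous_subtype_val, ?_⟩
      obtain ⟨p, hp⟩ := h1
      have hpcl : p ∈ closure S := hWsub hp.2
      obtain ⟨q, hqVW, hqS⟩ :=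
        mem_closure_iff.mp hpcl _ (hVo.inter isOpen_interior) hp
      exact ⟨⟨q, hqS⟩, hqVW⟩
    · exact ⟨isOpen_univ, ⟨⟨s₀, hs₀⟩, trivial⟩⟩
  · intro x x' β hagree
    simp only
    have hsim := sim_agree V hV2 W t₀ (fun α => ↑(x α)) (fun α => ↑(x' α)) β
      (fun α hα => by rw [hagree α hα])
    have hVe : V (sim V W t₀ (fun α => ↑(x α))) β
        = V (sim V W t₀ (fun α => ↑(x' α))) β := hV2 _ _ _ hsim
    rw [hVe]
  · intro x hx
    by_contra hcon
    push_neg at hcon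
    have hleg : ∀ β < θ, ¬ Dense (PlayedSet (sim V W t₀ (fun α => ↑(x α))) β) →
        sim V W t₀ (fun α => ↑(x α)) β ∈ V (sim V W t₀ (fun α => ↑(x α))) β := by
      intro β hβ hdT
      have hVz : V (fun γ => if hγ : γ < β then sim V W t₀ (fun α => ↑(x α)) γ else t₀) β
          = V (sim V W t₀ (fun α => ↑(x α))) β := hV2 _ _ _ fun γ hγ => dif_pos hγ
      rw [sim_eq]
      split_ifs with h1 h2
      · rw [hVz] at h1
        have hx2 := hx β hβ (hcon β hβ)
        simp only at hx2
        rw [if_pos h1] at hx2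
        exact hx2.1
      · exact hVz ▸ h2.choose_spec
      · exact absurd (hVz.symm ▸ (hV1 _ β hdT).2) h2
    obtain ⟨β, hβ, hdT⟩ := hV3 _ hleg
    exact hcon β hβ (densS x β hdT)

theorem stmt2 {T : Type u} [TopologicalSpace T] (S : Set T)
    (h : closure (interior (closure S)) = closure S) :
    gd ↥S ≤ gd T := by
  classical
  obtain ⟨κ₀, hκ₀1, hκ₀2⟩ := exists_winning T
  unfold gd
  refine csInf_le_csInf (OrderBot.bddBelow _) ⟨κ₀, hκ₀1, hκ₀2⟩ ?_
  intro κ hκ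
  refine ⟨hκ.1, ?_⟩
  by_cases hS : S.Nonempty
  · exact transfer S h hS hκ.2
  · rw [Set.not_nonempty_iff_eq_empty] at hS
    have hE : IsEmpty ↥S := Set.isEmpty_coe_sort.mpr hS
    have hdense : ∀ s : Set ↥S, Dense s := fun s =>
      dense_iff_inter_open.mpr fun U _ hne => (hE.false hne.some).elim
    refine ⟨fun _ _ => ∅, fun x β hd => absurd (hdense _) hd, fun _ _ _ _ => rfl, ?_⟩
    intro x _
    refine ⟨0, ?_, hdense _⟩
    have h0 : (0 : Cardinal.{u}) < Order.succ κ :=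
      lt_of_lt_of_le Cardinal.aleph0_pos (hκ.1.trans (Order.le_succ κ))
    have := Cardinal.ord_lt_ord.mpr h0
    rwa [Cardinal.ord_zero] at this
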